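/- arXiv:2509.18215 — 6 statements merged into one kernel-verified Lean document; each statement's English description precedes it below -/
import Mathlib

section
/- If topic arguments x and y are strength-inconsistent between QBAF G and its update G', then there exists at least one SSI explanation, and the empty set is not an SSI explanation. -/
open scoped Classical

/-- A Quantitative Bipolar Argumentation Framework (QBAF). -/
structure QBAF (α : Type*) where
  args : Set α
  τ : α → ℝ
  att : Set (α × α)
  supp : Set (α × α)
  att_sub : att ⊆ args ×ˢ args
  supp_sub : supp ⊆ args ×ˢ args

namespace QBAF

variable {α : Type*}

/-- Equivalence of QBAFs: same arguments, same initial strengths on the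
arguments, same attacks and supports. -/
def Equiv (G H : QBAF α) : Prop :=
  G.args = H.args ∧ (∀ a ∈ G.args, G.τ a = H.τ a) ∧ G.att = H.att ∧ G.supp = H.supp

/-- The reversal of `G'` to `G` w.r.t. `S`. -/
noncomputable def reversal (G G' : QBAF α) (S : Set α) : QBAF α where
  args := (G'.args ∪ S) \ (S \ G.args)
  τ := fun a => if a ∈ G.args ∩ S then G.τ a else G'.τ a
  att := ((G'.att \ (S ×ˢ G.args)) ∪
      ((S ×ˢ ((G'.args ∪ S) \ (S \ G.args))) ∩ G.att)) ∩
      (((G'.args ∪ S) \ (S \ G.args)) ×ˢ ((G'.args ∪ S) \ (S \ G.args)))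
  supp := ((G'.supp \ (S ×ˢ G.args)) ∪
      ((S ×ˢ ((G'.args ∪ S) \ (S \ G.args))) ∩ G.supp)) ∩
      (((G'.args ∪ S) \ (S \ G.args)) ×ˢ ((G'.args ∪ S) \ (S \ G.args)))
  att_sub := Set.inter_subset_right
  supp_sub := Set.inter_subset_right

/-- Comparability of `x` and `y` in `G` w.r.t. semantics `σ`:
both final strengths are defined. -/
def comparable (σ : QBAF α → α → Option ℝ) (G : QBAF α) (x y : α) : Prop :=
  σ G x ≠ none ∧ σ G y ≠ none

/-- Strength consistency of `x` and `y` between `G` and `G'`. -/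
def scon (σ : QBAF α → α → Option ℝ) (G G' : QBAF α) (x y : α) : Prop :=
  (∀ a b a' b' : ℝ, σ G x = some a → σ G y = some b →
      σ G' x = some a' → σ G' y = some b' →
      (a > b → a' > b') ∧ (a < b → a' < b') ∧ (a = b → a' = b')) ∧
  (comparable σ G x y ↔ comparable σ G' x y)

/-- Sufficient strength inconsistency (SSI) explanation. -/
def SSI (σ : QBAF α → α → Option ℝ) (G G' : QBAF α) (x y : α) (S : Set α) : Prop :=
  S ⊆ G.args ∪ G'.args ∧
  ((S = ∅ ∧ scon σ G G' x y) ∨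
   (¬ scon σ G G' x y ∧
    ¬ scon σ G (reversal G G' ((G.args ∪ G'.args) \ S)) x y))

/-- ⊂-minimal SSI explanation. -/
def minSSI (σ : QBAF α → α → Option ℝ) (G G' : QBAF α) (x y : α) (S : Set α) : Prop :=
  SSI σ G G' x y S ∧ ∀ S' ⊂ S, ¬ SSI σ G G' x y S'

/-- Counterfactual strength inconsistency (CSI) explanation. -/
def CSI (σ : QBAF α → α → Option ℝ) (G G' : QBAF α) (x y : α) (C : Set α) : Prop :=
  SSI σ G G' x y C ∧ scon σ G (reversal G G' C) x y

/-- ⊂-minimal CSI explanation. -/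
def minCSI (σ : QBAF α → α → Option ℝ) (G G' : QBAF α) (x y : α) (C : Set α) : Prop :=
  CSI σ G G' x y C ∧ ∀ C' ⊂ C, ¬ CSI σ G G' x y C'

/-- (⊂-minimal) necessary strength inconsistency (NSI) explanation. -/
def NSI (σ : QBAF α → α → Option ℝ) (G G' : QBAF α) (x y : α) (N : Set α) : Prop :=
  (N = ∅ ∧ scon σ G G' x y) ∨
  (¬ scon σ G G' x y ∧ SSI σ G G' x y N ∧
   (∀ S ⊆ (G.args ∪ G'.args) \ N, ¬ SSI σ G G' x y S) ∧
   (∀ N' ⊂ N, ¬ (SSI σ G G' x y N' ∧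
      ∀ S ⊆ (G.args ∪ G'.args) \ N', ¬ SSI σ G G' x y S)))

/-- Reachability in the directed graph `(args, att ∪ supp)` of a QBAF. -/
def reach (G : QBAF α) (a b : α) : Prop :=
  Relation.TransGen (fun u v => (u, v) ∈ G.att ∪ G.supp) a b

/-- A QBAF is acyclic iff no argument is reachable from itself. -/
def Acyclic (G : QBAF α) : Prop := ∀ a, ¬ reach G a a

/-- Restriction of `G` to a set `A` of arguments. -/
def restrict (G : QBAF α) (A : Set α) : QBAF α where
  args := G.args ∩ A
  τ := G.τ
  att := G.att ∩ (A ×ˢ A)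
  supp := G.supp ∩ (A ×ˢ A)
  att_sub := by
    intro p hp
    exact ⟨⟨(G.att_sub hp.1).1, hp.2.1⟩, (G.att_sub hp.1).2, hp.2.2⟩
  supp_sub := by
    intro p hp
    exact ⟨⟨(G.supp_sub hp.1).1, hp.2.1⟩, (G.supp_sub hp.1).2, hp.2.2⟩

/-- `σ` is an aggregation-influence semantics with (parameterised) influence
function `f` and aggregation function `g`: on acyclic QBAFs, the final strength
of an argument is obtained by aggregating the final strengths of its attackers
and supporters and applying the influence of the aggregation. -/
def AggregationInfluence (σ : QBAF α → α → Option ℝ)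
    (f : ℝ → ℝ → ℝ) (g : Set ℝ → Set ℝ → ℝ) : Prop :=
  ∀ G : QBAF α, G.Acyclic → ∀ x ∈ G.args,
    σ G x = some (f (G.τ x)
      (g {s | ∃ y, (y, x) ∈ G.att ∧ σ G y = some s}
         {s | ∃ y, (y, x) ∈ G.supp ∧ σ G y = some s}))

/-- SSI explanation relativized to a class `𝒢` of QBAFs. -/
def SSIin (𝒢 : QBAF α → Prop) (σ : QBAF α → α → Option ℝ)
    (G G' : QBAF α) (x y : α) (S : Set α) : Prop :=
  S ⊆ G.args ∪ G'.args ∧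
  ((S = ∅ ∧ scon σ G G' x y) ∨
   (¬ scon σ G G' x y ∧
    ¬ scon σ G (reversal G G' ((G.args ∪ G'.args) \ S)) x y ∧
    𝒢 (reversal G G' ((G.args ∪ G'.args) \ S))))

/-- ⊂-minimal SSI explanation relativized to `𝒢`. -/
def minSSIin (𝒢 : QBAF α → Prop) (σ : QBAF α → α → Option ℝ)
    (G G' : QBAF α) (x y : α) (S : Set α) : Prop :=
  SSIin 𝒢 σ G G' x y S ∧ ∀ S' ⊂ S, ¬ SSIin 𝒢 σ G G' x y S'

/-- CSI explanation relativized to `𝒢`. -/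
def CSIin (𝒢 : QBAF α → Prop) (σ : QBAF α → α → Option ℝ)
    (G G' : QBAF α) (x y : α) (C : Set α) : Prop :=
  SSIin 𝒢 σ G G' x y C ∧ scon σ G (reversal G G' C) x y ∧ 𝒢 (reversal G G' C)

/-- ⊂-minimal CSI explanation relativized to `𝒢`. -/
def minCSIin (𝒢 : QBAF α → Prop) (σ : QBAF α → α → Option ℝ)
    (G G' : QBAF α) (x y : α) (C : Set α) : Prop :=
  CSIin 𝒢 σ G G' x y C ∧ ∀ C' ⊂ C, ¬ CSIin 𝒢 σ G G' x y C'

/-- (⊂-minimal) NSI explanation relativized to `𝒢`. -/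
def NSIin (𝒢 : QBAF α → Prop) (σ : QBAF α → α → Option ℝ)
    (G G' : QBAF α) (x y : α) (N : Set α) : Prop :=
  (N = ∅ ∧ scon σ G G' x y) ∨
  (¬ scon σ G G' x y ∧ SSIin 𝒢 σ G G' x y N ∧
   (∀ S ⊆ (G.args ∪ G'.args) \ N, ¬ SSIin 𝒢 σ G G' x y S) ∧
   (∀ N' ⊂ N, ¬ (SSIin 𝒢 σ G G' x y N' ∧
      ∀ S ⊆ (G.args ∪ G'.args) \ N', ¬ SSIin 𝒢 σ G G' x y S)))

end QBAF

lemma reversal_empty_equiv {α : Type*} (G G' : QBAF α) :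
    QBAF.Equiv (QBAF.reversal G G' ∅) G' := by
  have hargs : ((G'.args ∪ (∅ : Set α)) \ ((∅ : Set α) \ G.args)) = G'.args := by
    simp
  refine ⟨hargs, ?_, ?_, ?_⟩
  · intro a _; simp [QBAF.reversal]
  · show _ = G'.att
    simp only [QBAF.reversal, hargs]
    ext ⟨u, v⟩
    simp only [Set.mem_inter_iff, Set.mem_union, Set.mem_diff, Set.mem_prod,
      Set.mem_empty_iff_false, false_and, and_false, not_false_iff, and_true, or_false]
    constructor
    · tauto
    · intro huv
      exact ⟨huv, (G'.att_sub huv).1, (G'.att_sub huv).2⟩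
  · show _ = G'.supp
    simp only [QBAF.reversal, hargs]
    ext ⟨u, v⟩
    simp only [Set.mem_inter_iff, Set.mem_union, Set.mem_diff, Set.mem_prod,
      Set.mem_empty_iff_false, false_and, and_false, not_false_iff, and_true, or_false]
    constructor
    · tauto
    · intro huv
      exact ⟨huv, (G'.supp_sub huv).1, (G'.supp_sub huv).2⟩

lemma reversal_full_equiv {α : Type*} (G G' : QBAF α) :
    QBAF.Equiv (QBAF.reversal G G' (G.args ∪ G'.args)) G := by
  set A := G.args ∪ G'.args with hA
  have hargs : ((G'.args ∪ A) \ (A \ G.args)) = G.args := by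
    ext u
    simp only [hA, Set.mem_diff, Set.mem_union]
    tauto
  refine ⟨hargs, ?_, ?_, ?_⟩
  · intro a ha
    have hmem : a ∈ G.args ∩ A := by
      have h2 : a ∈ (G'.args ∪ A) \ (A \ G.args) := ha
      rw [hargs] at h2
      exact ⟨h2, Or.inl h2⟩
    simp only [QBAF.reversal]
    rw [if_pos hmem]
  · show _ = G.att
    simp only [QBAF.reversal, hargs]
    ext ⟨u, v⟩
    simp only [Set.mem_inter_iff, Set.mem_union, Set.mem_diff, Set.mem_prod]
    constructor
    · rintro ⟨h1 | h2, hu, hv⟩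
      · exact absurd ⟨Or.inr ((G'.att_sub h1.1).1), hv⟩ h1.2
      · exact h2.2
    · intro huv
      have hu := (G.att_sub huv).1
      have hv := (G.att_sub huv).2
      exact ⟨Or.inr ⟨⟨Or.inl hu, hv⟩, huv⟩, hu, hv⟩
  · show _ = G.supp
    simp only [QBAF.reversal, hargs]
    ext ⟨u, v⟩
    simp only [Set.mem_inter_iff, Set.mem_union, Set.mem_diff, Set.mem_prod]
    constructor
    · rintro ⟨h1 | h2, hu, hv⟩
      · exact absurd ⟨Or.inr ((G'.supp_sub h1.1).1), hv⟩ h1.2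
      · exact h2.2
    · intro huv
      have hu := (G.supp_sub huv).1
      have hv := (G.supp_sub huv).2
      exact ⟨Or.inr ⟨⟨Or.inl hu, hv⟩, huv⟩, hu, hv⟩

lemma scon_refl {α : Type*} (σ : QBAF α → α → Option ℝ) (G : QBAF α) (x y : α) :
    QBAF.scon σ G G x y := by
  constructor
  · intro a b a' b' ha hb ha' hb'
    rw [ha] at ha'; rw [hb] at hb'
    injection ha' with ha'; injection hb' with hb'
    subst ha'; subst hb'
    exact ⟨id, id, id⟩
  · exact Iff.rfl

/-- If `x` and `y` are strength-inconsistent between `G` and `G'`,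
then there exists at least one SSI explanation and `∅` is not an SSI
explanation. -/
theorem ssi_completeness {α : Type*} (σ : QBAF α → α → Option ℝ)
    (hσ : ∀ H H' : QBAF α, QBAF.Equiv H H' → σ H = σ H')
    (G G' : QBAF α) (x y : α)
    (hx : x ∈ G.args ∩ G'.args) (hy : y ∈ G.args ∩ G'.args)
    (h : ¬ QBAF.scon σ G G' x y) :
    (∃ S : Set α, QBAF.SSI σ G G' x y S) ∧ ¬ QBAF.SSI σ G G' x y ∅ := by
  have hscon_congr : ∀ H H' : QBAF α, QBAF.Equiv H H' →
      (QBAF.scon σ G H x y ↔ QBAF.scon σ G H' x y) := by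
    intro H H' hHH'
    have hf := hσ H H' hHH'
    simp [QBAF.scon, QBAF.comparable, hf]
  constructor
  · refine ⟨G.args ∪ G'.args, Set.Subset.rfl, Or.inr ⟨h, ?_⟩⟩
    rw [Set.diff_self]
    rw [hscon_congr _ _ (reversal_empty_equiv G G')]
    exact h
  · rintro ⟨-, (⟨-, hc⟩ | ⟨-, hc⟩)⟩
    · exact h hc
    · rw [Set.diff_empty] at hc
      exact hc ((hscon_congr _ _ (reversal_full_equiv G G')).mpr (scon_refl σ G x y))
end

section
/- In case of strength inconsistency, every ⊂-minimal NSI explanation meets every ⊂-minimal SSI explanation: if x ≁ y between G and G', then for all N in NX_⊂-min and all S in SX_⊂-min we have N ∩ S ≠ ∅. -/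
open scoped Classical

/-- In case of strength inconsistency, every (⊂-minimal) NSI
explanation meets every ⊂-minimal SSI explanation. -/
theorem nsi_meets_min_ssi {α : Type*} (σ : QBAF α → α → Option ℝ)
    (G G' : QBAF α) (x y : α)
    (hx : x ∈ G.args ∩ G'.args) (hy : y ∈ G.args ∩ G'.args)
    (h : ¬ QBAF.scon σ G G' x y) :
    ∀ N S : Set α, QBAF.NSI σ G G' x y N → QBAF.minSSI σ G G' x y S →
      N ∩ S ≠ ∅ := by
  intro N S hN hS hdisj
  rcases hN with ⟨hNe, hscon⟩ | ⟨_, _, hno, _⟩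
  · exact h hscon
  · have hSsub : S ⊆ (G.args ∪ G'.args) \ N := by
      intro a ha
      refine ⟨hS.1.1 ha, fun haN => ?_⟩
      exact Set.eq_empty_iff_forall_notMem.mp hdisj a ⟨haN, ha⟩
    exact hno S hSsub hS.1
end

section
/- Every aggregation-influence semantics satisfies the directional connectedness principle: for every acyclic QBAF G and argument x, the final strength of x in G equals the final strength of x in the restriction of G to {x} together with all arguments from which x is reachable. -/
open scoped Classical

/-- Every aggregation-influence semantics satisfies the
directional connectedness principle: for every acyclic QBAF `G` and argument
`x`, the final strength of `x` in `G` equals the final strength of `x` in the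
restriction of `G` to `{x}` together with all arguments from which `x` is
reachable. -/
theorem aggregation_influence_directional_connectedness {α : Type*}
    (σ : QBAF α → α → Option ℝ) (f : ℝ → ℝ → ℝ) (g : Set ℝ → Set ℝ → ℝ)
    (h : QBAF.AggregationInfluence σ f g)
    (G : QBAF α) (hac : G.Acyclic) (hfin : G.args.Finite)
    (x : α) (hx : x ∈ G.args) :
    σ G x = σ (G.restrict ({x} ∪ {y | QBAF.reach G y x})) x := by
  classical
  set A : Set α := {x} ∪ {y | QBAF.reach G y x} with hA
  set H : QBAF α := G.restrict A with hH
  -- edges give membership in args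
  have edge_args : ∀ {u v : α}, (u, v) ∈ G.att ∪ G.supp → u ∈ G.args ∧ v ∈ G.args := by
    intro u v huv
    rcases huv with h1 | h1
    · exact ⟨(G.att_sub h1).1, (G.att_sub h1).2⟩
    · exact ⟨(G.supp_sub h1).1, (G.supp_sub h1).2⟩
  have reach_args : ∀ {u v : α}, QBAF.reach G u v → u ∈ G.args := by
    intro u v huv
    induction huv with
    | single h1 => exact (edge_args h1).1
    | tail _ _ ih => exact ih
  -- H is acyclic
  have Hedge : ∀ {u v : α}, (u, v) ∈ H.att ∪ H.supp → (u, v) ∈ G.att ∪ G.supp := by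
    intro u v huv
    rcases huv with h1 | h1
    · exact Or.inl h1.1
    · exact Or.inr h1.1
  have Hac : H.Acyclic := by
    intro a ha
    refine hac a ?_
    exact Relation.TransGen.mono (fun u v huv => Hedge huv) _ _ ha
  -- key induction
  have key : ∀ n : ℕ, ∀ y, y ∈ G.args → (y = x ∨ QBAF.reach G y x) →
      ({u | QBAF.reach G u y}).ncard ≤ n → σ G y = σ H y := by
    intro n
    induction n using Nat.strong_induction_on with
    | _ n ih =>
      intro y hy hyx hcard
      have hyA : y ∈ A := by
        rcases hyx with h1 | h1
        · exact Or.inl h1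
        · exact Or.inr h1
      have hyH : y ∈ H.args := ⟨hy, hyA⟩
      -- facts about parents
      have parent_facts : ∀ u : α, (u, y) ∈ G.att ∪ G.supp →
          u ∈ G.args ∧ u ∈ A ∧ σ G u = σ H u := by
        intro u hu
        have hua : u ∈ G.args := (edge_args hu).1
        have hreach : QBAF.reach G u x := by
          rcases hyx with h1 | h1
          · exact h1 ▸ Relation.TransGen.single hu
          · exact Relation.TransGen.trans (Relation.TransGen.single hu) h1
        have huA : u ∈ A := Or.inr hreach
        -- ancestors of u strictly inside ancestors of y
        have hsub : {w | QBAF.reach G w u} ⊂ {w | QBAF.reach G w y} := by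
          constructor
          · intro w hw
            exact Relation.TransGen.tail hw hu
          · intro hcontra
            have : u ∈ {w | QBAF.reach G w u} := hcontra (Relation.TransGen.single hu)
            exact hac u this
        have hfinY : ({w | QBAF.reach G w y}).Finite :=
          hfin.subset (fun w hw => reach_args hw)
        have hlt : ({w | QBAF.reach G w u}).ncard < ({w | QBAF.reach G w y}).ncard :=
          Set.ncard_lt_ncard hsub hfinY
        have := ih (({w | QBAF.reach G w u}).ncard) (lt_of_lt_of_le hlt hcard)
          u hua (Or.inr hreach) le_rfl
        exact ⟨hua, huA, this⟩
      have hGy := h G hac y hy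
      have hHy := h H Hac y hyH
      rw [hGy, hHy]
      have hτ : H.τ y = G.τ y := rfl
      have hattset : {s | ∃ u, (u, y) ∈ G.att ∧ σ G u = some s} =
          {s | ∃ u, (u, y) ∈ H.att ∧ σ H u = some s} := by
        ext s
        constructor
        · rintro ⟨u, hu, hs⟩
          obtain ⟨hua, huA, heq⟩ := parent_facts u (Or.inl hu)
          exact ⟨u, ⟨hu, huA, hyA⟩, heq ▸ hs⟩
        · rintro ⟨u, hu, hs⟩
          obtain ⟨hua, huA, heq⟩ := parent_facts u (Or.inl hu.1)
          exact ⟨u, hu.1, heq ▸ hs⟩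
      have hsuppset : {s | ∃ u, (u, y) ∈ G.supp ∧ σ G u = some s} =
          {s | ∃ u, (u, y) ∈ H.supp ∧ σ H u = some s} := by
        ext s
        constructor
        · rintro ⟨u, hu, hs⟩
          obtain ⟨hua, huA, heq⟩ := parent_facts u (Or.inr hu)
          exact ⟨u, ⟨hu, huA, hyA⟩, heq ▸ hs⟩
        · rintro ⟨u, hu, hs⟩
          obtain ⟨hua, huA, heq⟩ := parent_facts u (Or.inr hu.1)
          exact ⟨u, hu.1, heq ▸ hs⟩
      rw [hτ, hattset, hsuppset]
  exact key (({u | QBAF.reach G u x}).ncard) x hx (Or.inl rfl) le_rfl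
end

section
/- An argument a present in both Args and Args' whose initial strength is unchanged (τ(a) = τ'(a)) and whose sets of outgoing attacks and outgoing supports are unchanged between G and G' is not a member of any ⊂-minimal SSI, NSI, or CSI explanation of any topic arguments x and y. -/
open scoped Classical

namespace QBAFAux

open QBAF

variable {α : Type*}

lemma ext' {G H : QBAF α} (h1 : G.args = H.args) (h2 : G.τ = H.τ)
    (h3 : G.att = H.att) (h4 : G.supp = H.supp) : G = H := by
  cases G; cases H
  cases h1; cases h2; cases h3; cases h4; rfl

lemma edge_iff {G G' : QBAF α} {a : α} {E E' : Set (α × α)}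
    (hE : E ⊆ G.args ×ˢ G.args) (hE' : E' ⊆ G'.args ×ˢ G'.args)
    (h : (({a} : Set α) ×ˢ G.args) ∩ E = (({a} : Set α) ×ˢ G'.args) ∩ E') :
    ∀ b, (a, b) ∈ E ↔ (a, b) ∈ E' := by
  intro b
  constructor
  · intro hb
    have : (a, b) ∈ (({a} : Set α) ×ˢ G.args) ∩ E := ⟨⟨rfl, (hE hb).2⟩, hb⟩
    rw [h] at this; exact this.2
  · intro hb
    have : (a, b) ∈ (({a} : Set α) ×ˢ G'.args) ∩ E' := ⟨⟨rfl, (hE' hb).2⟩, hb⟩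
    rw [← h] at this; exact this.2

lemma rev_edges_eq {G : QBAF α} {a : α} {E E' : Set (α × α)}
    (hE : E ⊆ G.args ×ˢ G.args)
    (hiff : ∀ b, (a, b) ∈ E ↔ (a, b) ∈ E')
    (S A : Set α) (haA : a ∈ A) :
    ((E' \ (S ×ˢ G.args)) ∪ ((S ×ˢ A) ∩ E)) ∩ (A ×ˢ A)
      = ((E' \ ((S \ {a}) ×ˢ G.args)) ∪ (((S \ {a}) ×ˢ A) ∩ E)) ∩ (A ×ˢ A) := by
  ext ⟨u, v⟩
  by_cases hu : u = a
  · subst hu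
    by_cases hS : u ∈ S
    · have h1 : (u, v) ∈ E' → v ∈ G.args := fun h => (hE ((hiff v).2 h)).2
      have h2 := hiff v
      simp only [Set.mem_inter_iff, Set.mem_union, Set.mem_diff, Set.mem_prod,
        Set.mem_singleton_iff, not_true_eq_false, and_true, true_and, hS]
      tauto
    · simp only [Set.mem_inter_iff, Set.mem_union, Set.mem_diff, Set.mem_prod,
        Set.mem_singleton_iff, hS, false_and, not_false_eq_true, and_true, true_and]
  · simp only [Set.mem_inter_iff, Set.mem_union, Set.mem_diff, Set.mem_prod,
      Set.mem_singleton_iff, hu, not_false_eq_true, and_true]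

lemma reversal_diff_singleton {G G' : QBAF α} {a : α}
    (ha : a ∈ G.args ∩ G'.args) (hτ : G.τ a = G'.τ a)
    (hatt : (({a} : Set α) ×ˢ G.args) ∩ G.att = (({a} : Set α) ×ˢ G'.args) ∩ G'.att)
    (hsupp : (({a} : Set α) ×ˢ G.args) ∩ G.supp = (({a} : Set α) ×ˢ G'.args) ∩ G'.supp)
    (S : Set α) :
    QBAF.reversal G G' S = QBAF.reversal G G' (S \ {a}) := by
  obtain ⟨haG, haG'⟩ := ha
  have hA : (G'.args ∪ S) \ (S \ G.args)
      = (G'.args ∪ (S \ {a})) \ ((S \ {a}) \ G.args) := by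
    ext b
    by_cases hb : b = a
    · subst hb; simp [haG, haG']
    · simp [hb]
  have haA : a ∈ (G'.args ∪ S) \ (S \ G.args) :=
    ⟨Or.inl haG', fun h => h.2 haG⟩
  have hattiff := edge_iff G.att_sub G'.att_sub hatt
  have hsuppiff := edge_iff G.supp_sub G'.supp_sub hsupp
  apply ext'
  · exact hA
  · funext b
    by_cases hb : b = a
    · subst hb
      simp only [QBAF.reversal, Set.mem_inter_iff, Set.mem_diff,
        Set.mem_singleton_iff, not_true_eq_false, and_false, if_false]
      split_ifs with h
      · exact hτ
      · rfl
    · simp only [QBAF.reversal, Set.mem_inter_iff, Set.mem_diff,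
        Set.mem_singleton_iff, hb, not_false_eq_true, and_true]
  · dsimp only [QBAF.reversal]
    rw [← hA]
    exact rev_edges_eq G.att_sub hattiff S _ haA
  · dsimp only [QBAF.reversal]
    rw [← hA]
    exact rev_edges_eq G.supp_sub hsuppiff S _ haA

lemma SSI_erase {σ : QBAF α → α → Option ℝ} {G G' : QBAF α} {a x y : α}
    (ha : a ∈ G.args ∩ G'.args) (hτ : G.τ a = G'.τ a)
    (hatt : (({a} : Set α) ×ˢ G.args) ∩ G.att = (({a} : Set α) ×ˢ G'.args) ∩ G'.att)
    (hsupp : (({a} : Set α) ×ˢ G.args) ∩ G.supp = (({a} : Set α) ×ˢ G'.args) ∩ G'.supp)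
    {S : Set α} (hS : QBAF.SSI σ G G' x y S) :
    QBAF.SSI σ G G' x y (S \ {a}) := by
  obtain ⟨hsub, h⟩ := hS
  refine ⟨Set.diff_subset.trans hsub, ?_⟩
  rcases h with ⟨he, hsc⟩ | ⟨h1, h2⟩
  · exact Or.inl ⟨by rw [he]; simp, hsc⟩
  · refine Or.inr ⟨h1, ?_⟩
    have key : QBAF.reversal G G' ((G.args ∪ G'.args) \ (S \ {a}))
        = QBAF.reversal G G' ((G.args ∪ G'.args) \ S) := by
      rw [reversal_diff_singleton ha hτ hatt hsupp ((G.args ∪ G'.args) \ (S \ {a})),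
          reversal_diff_singleton ha hτ hatt hsupp ((G.args ∪ G'.args) \ S)]
      congr 1
      ext b
      by_cases hb : b = a <;> simp [hb]
    rw [key]; exact h2

end QBAFAux

/-- An argument `a` present in both `Args` and `Args'` whose
initial strength is unchanged and whose sets of outgoing attacks and supports
are unchanged between `G` and `G'` is not a member of any ⊂-minimal SSI, NSI,
or CSI explanation of any topic arguments `x` and `y`. -/
theorem unchanged_not_in_min_explanations {α : Type*}
    (σ : QBAF α → α → Option ℝ) (G G' : QBAF α) (a : α)
    (ha : a ∈ G.args ∩ G'.args) (hτ : G.τ a = G'.τ a)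
    (hatt : (({a} : Set α) ×ˢ G.args) ∩ G.att = (({a} : Set α) ×ˢ G'.args) ∩ G'.att)
    (hsupp : (({a} : Set α) ×ˢ G.args) ∩ G.supp = (({a} : Set α) ×ˢ G'.args) ∩ G'.supp) :
    ∀ (x y : α) (S : Set α),
      (QBAF.minSSI σ G G' x y S ∨ QBAF.NSI σ G G' x y S ∨
       QBAF.minCSI σ G G' x y S) → a ∉ S := by
  intro x y S h haS
  have hss : S \ {a} ⊂ S := ⟨Set.diff_subset, fun hc => (hc haS).2 rfl⟩
  rcases h with ⟨hS, hmin⟩ | hN | ⟨⟨hSSI, hsc⟩, hmin⟩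
  · exact hmin _ hss (QBAFAux.SSI_erase ha hτ hatt hsupp hS)
  · rcases hN with ⟨he, _⟩ | ⟨hns, hSSI, hall, hmin⟩
    · rw [he] at haS; exact haS
    · refine hmin (S \ {a}) hss ⟨QBAFAux.SSI_erase ha hτ hatt hsupp hSSI, ?_⟩
      intro T hT hTS
      refine hall (T \ {a}) ?_ (QBAFAux.SSI_erase ha hτ hatt hsupp hTS)
      intro b hb
      have hb2 := hT hb.1
      exact ⟨hb2.1, fun hbS => hb2.2 ⟨hbS, hb.2⟩⟩
  · refine hmin (S \ {a}) hss ⟨QBAFAux.SSI_erase ha hτ hatt hsupp hSSI, ?_⟩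
    rw [← QBAFAux.reversal_diff_singleton ha hτ hatt hsupp S]
    exact hsc
end

section
/- For an argument a with τ(a) = τ'(a) and unchanged outgoing attack and support edges between G and G', the reversal of G' to G with respect to any set S equals the reversal with respect to S \ {a}. -/
open scoped Classical

private lemma QBAF.ext' {α : Type*} {G H : QBAF α} (h1 : G.args = H.args)
    (h2 : G.τ = H.τ) (h3 : G.att = H.att) (h4 : G.supp = H.supp) : G = H := by
  cases G; cases H; simp_all

private lemma edge_aux {α : Type*} (E E' : Set (α × α)) (GA S A : Set α) (a : α)
    (hav : ∀ v, (a, v) ∈ E ↔ (a, v) ∈ E') :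
    ((E' \ (S ×ˢ GA)) ∪ ((S ×ˢ A) ∩ E)) ∩ (A ×ˢ A)
      = ((E' \ ((S \ {a}) ×ˢ GA)) ∪ (((S \ {a}) ×ˢ A) ∩ E)) ∩ (A ×ˢ A) := by
  by_cases haS : a ∈ S
  · ext ⟨u, v⟩
    by_cases hu : u = a
    · subst hu
      simp only [Set.mem_inter_iff, Set.mem_union, Set.mem_diff, Set.mem_prod,
        Set.mem_singleton_iff, haS, true_and, not_true, and_false, hav v]
      tauto
    · simp only [Set.mem_inter_iff, Set.mem_union, Set.mem_diff, Set.mem_prod,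
        Set.mem_singleton_iff, hu, not_false_iff, and_true]
  · rw [Set.diff_singleton_eq_self haS]

/-- For an argument `a` with `τ(a) = τ'(a)` and unchanged
outgoing attack and support edges between `G` and `G'`, the reversal of `G'`
to `G` with respect to any set `S` equals the reversal with respect to
`S \ {a}`. -/
theorem reversal_erase_unchanged {α : Type*} (G G' : QBAF α) (a : α)
    (ha : a ∈ G.args ∩ G'.args) (hτ : G.τ a = G'.τ a)
    (hatt : (({a} : Set α) ×ˢ G.args) ∩ G.att = (({a} : Set α) ×ˢ G'.args) ∩ G'.att)
    (hsupp : (({a} : Set α) ×ˢ G.args) ∩ G.supp = (({a} : Set α) ×ˢ G'.args) ∩ G'.supp) :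
    ∀ S : Set α, QBAF.reversal G G' S = QBAF.reversal G G' (S \ {a}) := by
  intro S
  obtain ⟨haG, haG'⟩ := ha
  have havA : ∀ v, (a, v) ∈ G.att ↔ (a, v) ∈ G'.att := by
    intro v
    constructor
    · intro h
      have : (a, v) ∈ (({a} : Set α) ×ˢ G.args) ∩ G.att :=
        ⟨⟨rfl, (G.att_sub h).2⟩, h⟩
      rw [hatt] at this; exact this.2
    · intro h
      have : (a, v) ∈ (({a} : Set α) ×ˢ G'.args) ∩ G'.att :=
        ⟨⟨rfl, (G'.att_sub h).2⟩, h⟩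
      rw [← hatt] at this; exact this.2
  have havS : ∀ v, (a, v) ∈ G.supp ↔ (a, v) ∈ G'.supp := by
    intro v
    constructor
    · intro h
      have : (a, v) ∈ (({a} : Set α) ×ˢ G.supp.image Prod.snd) ∩ G.supp → True := fun _ => trivial
      have h2 : (a, v) ∈ (({a} : Set α) ×ˢ G.args) ∩ G.supp :=
        ⟨⟨rfl, (G.supp_sub h).2⟩, h⟩
      rw [hsupp] at h2; exact h2.2
    · intro h
      have h2 : (a, v) ∈ (({a} : Set α) ×ˢ G'.args) ∩ G'.supp :=
        ⟨⟨rfl, (G'.supp_sub h).2⟩, h⟩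
      rw [← hsupp] at h2; exact h2.2
  have hargs : (G'.args ∪ S) \ (S \ G.args)
      = (G'.args ∪ (S \ {a})) \ ((S \ {a}) \ G.args) := by
    ext b
    by_cases hb : b = a
    · subst hb
      simp [Set.mem_diff, Set.mem_union, haG, haG']
    · simp only [Set.mem_diff, Set.mem_union, Set.mem_singleton_iff, hb,
        not_false_iff, and_true]
  apply QBAF.ext'
  · exact hargs
  · funext b
    simp only [QBAF.reversal]
    by_cases hb : b = a
    · subst hb
      by_cases haS : b ∈ S
      · have h1 : b ∈ G.args ∩ S := ⟨haG, haS⟩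
        have h2 : b ∉ G.args ∩ (S \ {b}) := by simp
        rw [if_pos h1, if_neg h2, hτ]
      · rw [Set.diff_singleton_eq_self haS]
    · have : b ∈ G.args ∩ S ↔ b ∈ G.args ∩ (S \ {a}) := by
        simp [Set.mem_inter_iff, Set.mem_diff, hb]
      by_cases hbs : b ∈ G.args ∩ S
      · rw [if_pos hbs, if_pos (this.mp hbs)]
      · rw [if_neg hbs, if_neg (fun h => hbs (this.mpr h))]
  · show ((G'.att \ (S ×ˢ G.args)) ∪ _) ∩ _ = _
    simp only [QBAF.reversal]
    rw [← hargs]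
    exact edge_aux G.att G'.att G.args S _ a havA
  · show ((G'.supp \ (S ×ˢ G.args)) ∪ _) ∩ _ = _
    simp only [QBAF.reversal]
    rw [← hargs]
    exact edge_aux G.supp G'.supp G.args S _ a havS
end

section
/- Restricting attention to reversals into acyclic QBAFs preserves completeness: if G and G' are acyclic and x ≁ y between G and G', then for each of SSI, ⊂-minimal SSI, CSI, ⊂-minimal CSI, and ⊂-minimal NSI explanations relativized to the class of acyclic QBAFs, at least one explanation exists and the empty set is not an explanation. -/
open scoped Classical

namespace QBAFaux

open QBAF

variable {α : Type*}

lemma equiv_rev_empty (G G' : QBAF α) : QBAF.Equiv (QBAF.reversal G G' ∅) G' := by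
  have hargs : (QBAF.reversal G G' ∅).args = G'.args := by
    simp [QBAF.reversal]
  refine ⟨hargs, ?_, ?_, ?_⟩
  · intro a ha
    simp [QBAF.reversal]
  · show ((G'.att \ (∅ ×ˢ G.args)) ∪ _) ∩ _ = G'.att
    ext ⟨u, v⟩
    have hs := @G'.att_sub (u, v)
    simp only [Set.mem_inter_iff, Set.mem_union, Set.mem_diff, Set.mem_prod,
      Set.mem_empty_iff_false, Set.union_empty, Set.diff_empty, Set.empty_diff] at *
    constructor
    · rintro ⟨h1 | h1, _⟩
      · exact h1.1
      · exact absurd h1.1.1 (by simp)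
    · intro hv
      exact ⟨Or.inl ⟨hv, by simp⟩, (hs hv).1, (hs hv).2⟩
  · show ((G'.supp \ (∅ ×ˢ G.args)) ∪ _) ∩ _ = G'.supp
    ext ⟨u, v⟩
    have hs := @G'.supp_sub (u, v)
    simp only [Set.mem_inter_iff, Set.mem_union, Set.mem_diff, Set.mem_prod,
      Set.mem_empty_iff_false, Set.union_empty, Set.diff_empty, Set.empty_diff] at *
    constructor
    · rintro ⟨h1 | h1, _⟩
      · exact h1.1
      · exact absurd h1.1.1 (by simp)
    · intro hv
      exact ⟨Or.inl ⟨hv, by simp⟩, (hs hv).1, (hs hv).2⟩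

lemma equiv_rev_full (G G' : QBAF α) :
    QBAF.Equiv (QBAF.reversal G G' (G.args ∪ G'.args)) G := by
  set A := G.args ∪ G'.args with hA
  have hargs : (QBAF.reversal G G' A).args = G.args := by
    show (G'.args ∪ A) \ (A \ G.args) = G.args
    ext a
    simp only [Set.mem_diff, Set.mem_union, hA]
    tauto
  refine ⟨hargs, ?_, ?_, ?_⟩
  · intro a ha
    rw [hargs] at ha
    simp only [QBAF.reversal]
    rw [if_pos ⟨ha, Or.inl ha⟩]
  · show ((G'.att \ (A ×ˢ G.args)) ∪ ((A ×ˢ ((G'.args ∪ A) \ (A \ G.args))) ∩ G.att))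
      ∩ (((G'.args ∪ A) \ (A \ G.args)) ×ˢ ((G'.args ∪ A) \ (A \ G.args))) = G.att
    have hA' : (G'.args ∪ A) \ (A \ G.args) = G.args := hargs
    rw [hA']
    ext ⟨u, v⟩
    have hs := @G.att_sub (u, v)
    have hs' := @G'.att_sub (u, v)
    simp only [Set.mem_inter_iff, Set.mem_union, Set.mem_diff, Set.mem_prod, hA] at *
    constructor
    · rintro ⟨h1 | h1, hu, hv⟩
      · exact absurd ⟨Or.inl hu, hv⟩ h1.2
      · exact h1.2
    · intro hv
      exact ⟨Or.inr ⟨⟨Or.inl (hs hv).1, (hs hv).2⟩, hv⟩, (hs hv).1, (hs hv).2⟩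
  · show ((G'.supp \ (A ×ˢ G.args)) ∪ ((A ×ˢ ((G'.args ∪ A) \ (A \ G.args))) ∩ G.supp))
      ∩ (((G'.args ∪ A) \ (A \ G.args)) ×ˢ ((G'.args ∪ A) \ (A \ G.args))) = G.supp
    have hA' : (G'.args ∪ A) \ (A \ G.args) = G.args := hargs
    rw [hA']
    ext ⟨u, v⟩
    have hs := @G.supp_sub (u, v)
    simp only [Set.mem_inter_iff, Set.mem_union, Set.mem_diff, Set.mem_prod, hA] at *
    constructor
    · rintro ⟨h1 | h1, hu, hv⟩
      · exact absurd ⟨Or.inl hu, hv⟩ h1.2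
      · exact h1.2
    · intro hv
      exact ⟨Or.inr ⟨⟨Or.inl (hs hv).1, (hs hv).2⟩, hv⟩, (hs hv).1, (hs hv).2⟩

lemma acyclic_of_equiv {H H' : QBAF α} (he : QBAF.Equiv H H') (h : H'.Acyclic) :
    H.Acyclic := by
  intro a ha
  apply h a
  unfold QBAF.reach at ha ⊢
  rw [← he.2.2.1, ← he.2.2.2]
  exact ha

lemma scon_refl (σ : QBAF α → α → Option ℝ) (G : QBAF α) (x y : α) :
    QBAF.scon σ G G x y := by
  constructor
  · intro a b a' b' h1 h2 h3 h4
    rw [h1] at h3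
    rw [h2] at h4
    cases h3; cases h4
    exact ⟨id, id, id⟩
  · rfl

lemma scon_congr (σ : QBAF α → α → Option ℝ) {G H H' : QBAF α} (x y : α)
    (he : σ H = σ H') : (QBAF.scon σ G H x y ↔ QBAF.scon σ G H' x y) := by
  unfold QBAF.scon QBAF.comparable
  rw [he]

lemma exists_minimal {A : Set α} (hA : A.Finite) (Q : Set α → Prop)
    (hQ : ∀ S, Q S → S ⊆ A) {S0 : Set α} (h0 : Q S0) :
    ∃ S, Q S ∧ ∀ S' ⊂ S, ¬ Q S' := by
  classical
  have hex : ∃ n, ∃ S, Q S ∧ S.ncard = n := ⟨S0.ncard, S0, h0, rfl⟩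
  obtain ⟨S, hS, hcard⟩ := Nat.find_spec hex
  refine ⟨S, hS, fun S' hss hQ' => ?_⟩
  have hlt : S'.ncard < S.ncard :=
    Set.ncard_lt_ncard hss (hA.subset (hQ S hS))
  rw [hcard] at hlt
  exact Nat.find_min hex hlt ⟨S', hQ', rfl⟩

end QBAFaux

/-- Restricting attention to reversals into acyclic QBAFs
preserves completeness: if `G` and `G'` are acyclic and `x ≁ y` between `G`
and `G'`, then for each of SSI, ⊂-minimal SSI, CSI, ⊂-minimal CSI, and
⊂-minimal NSI explanations relativized to the class of acyclic QBAFs, at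
least one explanation exists and `∅` is not an explanation. -/
theorem acyclic_explanation_completeness {α : Type*} (σ : QBAF α → α → Option ℝ)
    (hσ : ∀ H H' : QBAF α, QBAF.Equiv H H' → σ H = σ H')
    (G G' : QBAF α) (hG : G.Acyclic) (hG' : G'.Acyclic)
    (hfin : (G.args ∪ G'.args).Finite)
    (x y : α) (hx : x ∈ G.args ∩ G'.args) (hy : y ∈ G.args ∩ G'.args)
    (h : ¬ QBAF.scon σ G G' x y) :
    ((∃ S : Set α, QBAF.SSIin QBAF.Acyclic σ G G' x y S) ∧
      ¬ QBAF.SSIin QBAF.Acyclic σ G G' x y ∅) ∧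
    ((∃ S : Set α, QBAF.minSSIin QBAF.Acyclic σ G G' x y S) ∧
      ¬ QBAF.minSSIin QBAF.Acyclic σ G G' x y ∅) ∧
    ((∃ S : Set α, QBAF.CSIin QBAF.Acyclic σ G G' x y S) ∧
      ¬ QBAF.CSIin QBAF.Acyclic σ G G' x y ∅) ∧
    ((∃ S : Set α, QBAF.minCSIin QBAF.Acyclic σ G G' x y S) ∧
      ¬ QBAF.minCSIin QBAF.Acyclic σ G G' x y ∅) ∧
    ((∃ S : Set α, QBAF.NSIin QBAF.Acyclic σ G G' x y S) ∧
      ¬ QBAF.NSIin QBAF.Acyclic σ G G' x y ∅) := by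
  classical
  set A := G.args ∪ G'.args with hA
  -- reversal at ∅ behaves like G'
  have hσ0 : σ (QBAF.reversal G G' ∅) = σ G' :=
    hσ _ _ (QBAFaux.equiv_rev_empty G G')
  have hσfull : σ (QBAF.reversal G G' A) = σ G :=
    hσ _ _ (QBAFaux.equiv_rev_full G G')
  have hac0 : (QBAF.reversal G G' ∅).Acyclic :=
    QBAFaux.acyclic_of_equiv (QBAFaux.equiv_rev_empty G G') hG'
  have hacfull : (QBAF.reversal G G' A).Acyclic :=
    QBAFaux.acyclic_of_equiv (QBAFaux.equiv_rev_full G G') hG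
  have hdiff : A \ A = (∅ : Set α) := Set.diff_self
  have hdiff0 : A \ (∅ : Set α) = A := Set.diff_empty
  -- SSIin holds for A
  have hSSI_A : QBAF.SSIin QBAF.Acyclic σ G G' x y A := by
    refine ⟨le_refl A, Or.inr ⟨h, ?_, ?_⟩⟩
    · rw [hdiff, (QBAFaux.scon_congr σ x y hσ0)]
      exact h
    · rw [hdiff]
      exact hac0
  -- ∅ is not SSIin
  have hSSI_empty : ¬ QBAF.SSIin QBAF.Acyclic σ G G' x y ∅ := by
    rintro ⟨-, h1 | h1⟩
    · exact h (h1.2)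
    · rw [hdiff0, (QBAFaux.scon_congr σ x y hσfull)] at h1
      exact h1.2.1 (QBAFaux.scon_refl σ G x y)
  -- CSIin holds for A
  have hCSI_A : QBAF.CSIin QBAF.Acyclic σ G G' x y A := by
    refine ⟨hSSI_A, ?_, hacfull⟩
    rw [(QBAFaux.scon_congr σ x y hσfull)]
    exact QBAFaux.scon_refl σ G x y
  have hCSI_empty : ¬ QBAF.CSIin QBAF.Acyclic σ G G' x y ∅ :=
    fun hc => hSSI_empty hc.1
  -- minimal SSI
  obtain ⟨Sm, hSm, hSmmin⟩ :=
    QBAFaux.exists_minimal hfin (QBAF.SSIin QBAF.Acyclic σ G G' x y)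
      (fun S hS => hS.1) hSSI_A
  -- minimal CSI
  obtain ⟨Cm, hCm, hCmmin⟩ :=
    QBAFaux.exists_minimal hfin (QBAF.CSIin QBAF.Acyclic σ G G' x y)
      (fun S hS => hS.1.1) hCSI_A
  -- NSI: property P
  set P := fun N : Set α => QBAF.SSIin QBAF.Acyclic σ G G' x y N ∧
      ∀ S ⊆ A \ N, ¬ QBAF.SSIin QBAF.Acyclic σ G G' x y S with hP
  have hPA : P A := by
    refine ⟨hSSI_A, fun S hS hSS => ?_⟩
    rw [hdiff, Set.subset_empty_iff] at hS
    rw [hS] at hSS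
    exact hSSI_empty hSS
  obtain ⟨Nm, hNm, hNmmin⟩ :=
    QBAFaux.exists_minimal hfin P (fun S hS => hS.1.1) hPA
  have hNSI_Nm : QBAF.NSIin QBAF.Acyclic σ G G' x y Nm :=
    Or.inr ⟨h, hNm.1, hNm.2, hNmmin⟩
  have hNSI_empty : ¬ QBAF.NSIin QBAF.Acyclic σ G G' x y ∅ := by
    rintro (⟨-, hs⟩ | ⟨-, hs, -⟩)
    · exact h hs
    · exact hSSI_empty hs
  refine ⟨⟨⟨A, hSSI_A⟩, hSSI_empty⟩,
    ⟨⟨Sm, hSm, hSmmin⟩, fun hc => hSSI_empty hc.1⟩,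
    ⟨⟨A, hCSI_A⟩, hCSI_empty⟩,
    ⟨⟨Cm, hCm, hCmmin⟩, fun hc => hCSI_empty hc.1⟩,
    ⟨⟨Nm, hNSI_Nm⟩, hNSI_empty⟩⟩
end
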